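/- Let ω ∈ ℝ, g ≠ 0, κ, γ > 0, d ∈ (−1,1) and suppose C_b = g² d/(κγ) > 1. For any θ ∈ ℝ, define A(t) = (γ√(C_b − 1)/(√2 |g|)) e^{−i(ωt − θ)}, S(t) = (κγ√(C_b − 1)/(√2 g |g|)) e^{−i(ωt − θ)}, and D(t) = γκ/g² for all t ≥ 0. Then (A, S, D) is a (periodic, non-constant when ω ≠ 0) solution of the Maxwell–Bloch equations. -/

import Mathlib

/-- **The explicit coherent periodic orbits solve the Maxwell–Bloch equations when
`C_b > 1`.** For any phase `θ`, the functions
`A(t) = (γ√(C_b−1)/(√2|g|)) e^{−i(ωt−θ)}`, `S(t) = (κγ√(C_b−1)/(√2 g|g|)) e^{−i(ωt−θ)}`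
and `D(t) = γκ/g²` form a solution; it is periodic, and non-constant when `ω ≠ 0`. -/
theorem maxwell_bloch_periodic_solutions
    (ω g κ γ d θ : ℝ) (hg : g ≠ 0) (hκ : 0 < κ) (hγ : 0 < γ)
    (hd : -1 < d ∧ d < 1)
    (hCb : 1 < g ^ 2 * d / (κ * γ))
    (A S : ℝ → ℂ) (D : ℝ → ℝ)
    (hAdef : ∀ t, A t =
      ((γ * Real.sqrt (g ^ 2 * d / (κ * γ) - 1) / (Real.sqrt 2 * |g|) : ℝ) : ℂ) *
        Complex.exp (-Complex.I * ((ω * t - θ : ℝ) : ℂ)))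
    (hSdef : ∀ t, S t =
      ((κ * γ * Real.sqrt (g ^ 2 * d / (κ * γ) - 1) / (Real.sqrt 2 * g * |g|) : ℝ) : ℂ) *
        Complex.exp (-Complex.I * ((ω * t - θ : ℝ) : ℂ)))
    (hDdef : ∀ t, D t = γ * κ / g ^ 2) :
    (∀ t ≥ (0 : ℝ),
      HasDerivAt A (-((κ : ℂ) + (ω : ℂ) * Complex.I) * A t + (g : ℂ) * S t) t ∧
      HasDerivAt S (-((γ : ℂ) + (ω : ℂ) * Complex.I) * S t + (g : ℂ) * A t * (D t : ℂ)) t ∧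
      HasDerivAt D (-4 * g * ((starRingEnd ℂ) (A t) * S t).re - 2 * γ * (D t - d)) t) ∧
    (ω ≠ 0 →
      Function.Periodic A (2 * Real.pi / ω) ∧ Function.Periodic S (2 * Real.pi / ω) ∧
      ∃ t ≥ (0 : ℝ), A t ≠ A 0) := by
  have hA : A = fun t => ((γ * Real.sqrt (g ^ 2 * d / (κ * γ) - 1) / (Real.sqrt 2 * |g|) : ℝ) : ℂ) *
        Complex.exp (-Complex.I * ((ω * t - θ : ℝ) : ℂ)) := funext hAdef
  have hS : S = fun t => ((κ * γ * Real.sqrt (g ^ 2 * d / (κ * γ) - 1) / (Real.sqrt 2 * g * |g|) : ℝ) : ℂ) *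
        Complex.exp (-Complex.I * ((ω * t - θ : ℝ) : ℂ)) := funext hSdef
  have hD : D = fun _ => γ * κ / g ^ 2 := funext hDdef
  subst hA hS hD
  set s := Real.sqrt (g ^ 2 * d / (κ * γ) - 1) with hs_def
  set cA := γ * s / (Real.sqrt 2 * |g|) with hcA
  set cS := κ * γ * s / (Real.sqrt 2 * g * |g|) with hcS
  have hg2 : |g| ^ 2 = g ^ 2 := sq_abs g
  have hgabs : (0:ℝ) < |g| := abs_pos.mpr hg
  have h2 : (0:ℝ) < Real.sqrt 2 := Real.sqrt_pos.mpr (by norm_num)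
  have h2sq : Real.sqrt 2 ^ 2 = 2 := Real.sq_sqrt (by norm_num)
  have hspos : 0 < s := Real.sqrt_pos.mpr (by linarith)
  have hs2 : s ^ 2 = g ^ 2 * d / (κ * γ) - 1 := Real.sq_sqrt (by linarith)
  have key1 : g * cS = κ * cA := by
    rw [hcA, hcS]; field_simp
  have key2 : g * cA * (γ * κ / g ^ 2) = γ * cS := by
    rw [hcA, hcS]; field_simp
  have hs2' : s ^ 2 * (κ * γ) = g ^ 2 * d - κ * γ := by
    rw [hs2]; field_simp
  have key3 : -4 * g * (cA * cS) - 2 * γ * (γ * κ / g ^ 2 - d) = 0 := by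
    rw [hcA, hcS]
    field_simp
    linear_combination (-4*g^2*γ)*hs2' + (-(|g|^2*(2*γ*(γ*κ - g^2*d))))*h2sq +
      (-(2*(2*γ*(γ*κ - g^2*d))))*hg2
  have key1c : (g:ℂ) * (cS:ℂ) = (κ:ℂ) * (cA:ℂ) := by exact_mod_cast key1
  have key2c : (g:ℂ) * (cA:ℂ) * ((γ * κ / g ^ 2 : ℝ):ℂ) = (γ:ℂ) * (cS:ℂ) := by
    exact_mod_cast key2
  have hEderiv : ∀ t : ℝ, HasDerivAt (fun t : ℝ => Complex.exp (-Complex.I * ((ω * t - θ : ℝ) : ℂ)))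
      (-Complex.I * ω * Complex.exp (-Complex.I * ((ω * t - θ : ℝ) : ℂ))) t := by
    intro t
    have h0 : HasDerivAt (fun t : ℝ => ω * t - θ) ω t := by
      simpa using ((hasDerivAt_id t).const_mul ω).sub_const θ
    have h1 : HasDerivAt (fun t : ℝ => ((ω * t - θ : ℝ) : ℂ)) (ω : ℂ) t := h0.ofReal_comp
    have h2' := (h1.const_mul (-Complex.I)).cexp
    convert h2' using 1
    ring
  have hE1 : ∀ t : ℝ, (starRingEnd ℂ) (Complex.exp (-Complex.I * ((ω * t - θ : ℝ) : ℂ))) *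
      Complex.exp (-Complex.I * ((ω * t - θ : ℝ) : ℂ)) = 1 := by
    intro t
    rw [← Complex.exp_conj, ← Complex.exp_add]
    simp [Complex.conj_ofReal]
  constructor
  · intro t _
    refine ⟨?_, ?_, ?_⟩
    · have h := (hEderiv t).const_mul (cA:ℂ)
      convert h using 1
      · rfl
      simp only
      linear_combination Complex.exp (-Complex.I * ((ω * t - θ : ℝ) : ℂ)) * key1c
    · have h := (hEderiv t).const_mul (cS:ℂ)
      convert h using 1
      · rfl
      simp only
      linear_combination Complex.exp (-Complex.I * ((ω * t - θ : ℝ) : ℂ)) * key2c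
    · have hre : ((starRingEnd ℂ) ((cA:ℂ) * Complex.exp (-Complex.I * ((ω * t - θ : ℝ) : ℂ))) *
          ((cS:ℂ) * Complex.exp (-Complex.I * ((ω * t - θ : ℝ) : ℂ)))) = ((cA * cS : ℝ) : ℂ) := by
        rw [map_mul, Complex.conj_ofReal, Complex.ofReal_mul]
        linear_combination (cA:ℂ) * (cS:ℂ) * hE1 t
      simp only [hre]
      rw [Complex.ofReal_re]
      rw [key3]
      exact hasDerivAt_const t _
  · intro hω
    have hper : ∀ t : ℝ, Complex.exp (-Complex.I * ((ω * (t + 2 * Real.pi / ω) - θ : ℝ) : ℂ)) =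
        Complex.exp (-Complex.I * ((ω * t - θ : ℝ) : ℂ)) := by
      intro t
      have harg : ω * (t + 2 * Real.pi / ω) - θ = (ω * t - θ) + 2 * Real.pi := by
        field_simp; ring
      rw [harg]
      rw [show -Complex.I * (((ω * t - θ) + 2 * Real.pi : ℝ) : ℂ) =
          -Complex.I * ((ω * t - θ : ℝ) : ℂ) + ((-1 : ℤ) : ℂ) * (2 * Real.pi * Complex.I) by
        push_cast; ring]
      rw [Complex.exp_add, Complex.exp_int_mul_two_pi_mul_I, mul_one]
    refine ⟨fun t => by simp only; rw [hper t], fun t => by simp only; rw [hper t], ?_⟩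
    have hcA0 : (cA : ℂ) ≠ 0 := by
      have : 0 < cA := by rw [hcA]; positivity
      exact_mod_cast this.ne'
    have hexpne : ∀ x : ℂ, Complex.exp x ≠ 0 := Complex.exp_ne_zero
    have hexppi : Complex.exp (-(Real.pi : ℂ) * Complex.I) = -1 := by
      rw [show -(Real.pi : ℂ) * Complex.I = -((Real.pi : ℂ) * Complex.I) by ring,
        Complex.exp_neg, Complex.exp_pi_mul_I]
      norm_num
    have hexppi' : Complex.exp ((Real.pi : ℂ) * Complex.I) = -1 := Complex.exp_pi_mul_I
    -- choose t with ω * t = ± π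
    rcases lt_or_gt_of_ne hω with hneg | hpos
    · refine ⟨-Real.pi / ω, le_of_lt (div_pos_of_neg_of_neg (neg_neg_of_pos Real.pi_pos) hneg), ?_⟩
      simp only
      have harg : ω * (-Real.pi / ω) - θ = -Real.pi - θ := by field_simp
      have harg0 : ω * (0:ℝ) - θ = -θ := by ring
      rw [harg, harg0]
      have hE : Complex.exp (-Complex.I * ((-Real.pi - θ : ℝ) : ℂ)) =
          -Complex.exp (-Complex.I * ((-θ : ℝ) : ℂ)) := by
        rw [show -Complex.I * ((-Real.pi - θ : ℝ) : ℂ) =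
            (Real.pi : ℂ) * Complex.I + -Complex.I * ((-θ : ℝ) : ℂ) by push_cast; ring,
          Complex.exp_add, hexppi']
        ring
      rw [hE]
      intro hcontra
      have : (cA : ℂ) * Complex.exp (-Complex.I * ((-θ : ℝ) : ℂ)) = 0 := by
        linear_combination -(1/2 : ℂ) * hcontra
      exact (mul_ne_zero hcA0 (hexpne _)) this
    · refine ⟨Real.pi / ω, by positivity, ?_⟩
      simp only
      have harg : ω * (Real.pi / ω) - θ = Real.pi - θ := by field_simp
      have harg0 : ω * (0:ℝ) - θ = -θ := by ring
      rw [harg, harg0]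
      have hE : Complex.exp (-Complex.I * ((Real.pi - θ : ℝ) : ℂ)) =
          -Complex.exp (-Complex.I * ((-θ : ℝ) : ℂ)) := by
        rw [show -Complex.I * ((Real.pi - θ : ℝ) : ℂ) =
            -(Real.pi : ℂ) * Complex.I + -Complex.I * ((-θ : ℝ) : ℂ) by push_cast; ring,
          Complex.exp_add, hexppi]
        ring
      rw [hE]
      intro hcontra
      have : (cA : ℂ) * Complex.exp (-Complex.I * ((-θ : ℝ) : ℂ)) = 0 := by
        linear_combination -(1/2 : ℂ) * hcontra
      exact (mul_ne_zero hcA0 (hexpne _)) this
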